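/- Let X be a real random variable, p ∈ (0,1), I a Bernoulli random variable with P(I=1) = 1-p, and N an integer-valued random variable with P(N = n) = p(1-p)^n for n ≥ 0 (so N+1 is geometric with success probability p). Let (S_k) be a random walk with i.i.d. increments distributed as X, independent of N. Define W := max_{0 ≤ k ≤ N} S_k. Then W satisfies the distributional fixed-point equation W ∼ I·(W + X)^+, where on the right-hand side I, X, W are independent. -/

import Mathlib

open MeasureTheory ProbabilityTheory

def psum (k : ℕ) (x : ℕ → ℝ) : ℝ := ∑ i ∈ Finset.range k, x i

def Mn (n : ℕ) (x : ℕ → ℝ) : ℝ :=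
  (Finset.range (n + 1)).sup' Finset.nonempty_range_add_one (fun k => psum k x)

lemma psum_succ' (k : ℕ) (x : ℕ → ℝ) :
    psum (k + 1) x = x 0 + psum k (fun i => x (i + 1)) := by
  simp [psum, Finset.sum_range_succ', add_comm]

lemma measurable_psum (k : ℕ) : Measurable (psum k) :=
  Finset.measurable_sum _ fun i _ => measurable_pi_apply i

lemma measurable_Mn (n : ℕ) : Measurable (Mn n) := by
  have h : Mn n = (Finset.range (n + 1)).sup' Finset.nonempty_range_add_one psum := by
    funext x
    rw [Finset.sup'_apply]
    rfl
  rw [h]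
  exact Finset.measurable_sup' _ fun k _ => measurable_psum k

lemma Mn_nonneg (n : ℕ) (x : ℕ → ℝ) : 0 ≤ Mn n x := by
  have h0 : (0 : ℕ) ∈ Finset.range (n + 1) := by simp
  have h : psum 0 x = 0 := by simp [psum]
  unfold Mn
  rw [← h]
  exact Finset.le_sup' (fun k => psum k x) h0

lemma Mn_zero (x : ℕ → ℝ) : Mn 0 x = 0 := by
  simp [Mn, psum]

lemma Mn_congr {n : ℕ} {x y : ℕ → ℝ} (h : ∀ i < n, x i = y i) : Mn n x = Mn n y := by
  unfold Mn
  refine Finset.sup'_congr _ rfl fun k hk => ?_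
  unfold psum
  refine Finset.sum_congr rfl fun i hi => ?_
  exact h i (lt_of_lt_of_le (Finset.mem_range.1 hi) (Nat.lt_succ_iff.1 (Finset.mem_range.1 hk)))

lemma Mn_succ (n : ℕ) (x : ℕ → ℝ) :
    Mn (n + 1) x = max 0 (x 0 + Mn n (fun i => x (i + 1))) := by
  apply le_antisymm
  · apply Finset.sup'_le
    intro k hk
    match k with
    | 0 => simp [psum]
    | (j+1) =>
      have hj : j ∈ Finset.range (n + 1) := by
        have := Finset.mem_range.1 hk; exact Finset.mem_range.2 (by omega)
      calc psum (j + 1) x = x 0 + psum j (fun i => x (i + 1)) := psum_succ' j x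
        _ ≤ x 0 + Mn n (fun i => x (i + 1)) :=
            add_le_add_right (Finset.le_sup' (f := fun k => psum k (fun i => x (i+1))) hj) _
        _ ≤ _ := le_max_right _ _
  · apply max_le (Mn_nonneg _ _)
    rw [add_comm, ← le_sub_iff_add_le]
    apply Finset.sup'_le
    intro k hk
    rw [le_sub_iff_add_le, add_comm, ← psum_succ']
    have hk2 : k + 1 ∈ Finset.range (n + 1 + 1) := by
      have := Finset.mem_range.1 hk; exact Finset.mem_range.2 (by omega)
    exact Finset.le_sup' (f := fun k => psum k x) hk2

theorem stmt_8 {Ω : Type*} [MeasurableSpace Ω] (P : Measure Ω) [IsProbabilityMeasure P]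
    (p : ℝ) (hp : p ∈ Set.Ioo (0 : ℝ) 1)
    (X I : Ω → ℝ) (hXmeas : Measurable X) (hImeas : Measurable I)
    (hI1 : P {ω' | I ω' = 1} = ENNReal.ofReal (1 - p))
    (hI0 : P {ω' | I ω' = 0} = ENNReal.ofReal p)
    (N : Ω → ℕ) (hNmeas : Measurable N)
    (hNlaw : ∀ n : ℕ, P {ω' | N ω' = n} = ENNReal.ofReal (p * (1 - p) ^ n))
    (ξ : ℕ → Ω → ℝ) (hξmeas : ∀ i, Measurable (ξ i))
    (hξindep : iIndepFun ξ P)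
    (hξlaw : ∀ i, Measure.map (ξ i) P = Measure.map X P)
    (hNξ : IndepFun (fun ω' => (fun i => ξ i ω')) N P)
    (S : ℕ → Ω → ℝ) (hS0 : ∀ ω', S 0 ω' = 0)
    (hS : ∀ k ω', S (k + 1) ω' = S k ω' + ξ (k + 1) ω')
    (W : Ω → ℝ)
    (hW : ∀ ω', W ω' =
      (Finset.range (N ω' + 1)).sup' Finset.nonempty_range_add_one (fun k => S k ω'))
    (hIXW : iIndepFun ![I, X, W] P) :
    Measure.map W P = Measure.map (fun ω' => I ω' * max (W ω' + X ω') 0) P := by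
  classical
  obtain ⟨hp0, hp1⟩ := hp
  set μ : Measure ℝ := Measure.map X P with hμdef
  haveI hμprob : IsProbabilityMeasure μ := Measure.isProbabilityMeasure_map hXmeas.aemeasurable
  -- W in terms of Mn
  have hSeq : ∀ k ω', S k ω' = psum k (fun i => ξ (i + 1) ω') := by
    intro k
    induction k with
    | zero => intro ω'; simp [hS0, psum]
    | succ j ih =>
      intro ω'
      rw [hS, ih]
      simp [psum, Finset.sum_range_succ]
  have hWeq : ∀ ω', W ω' = Mn (N ω') (fun i => ξ (i + 1) ω') := by
    intro ω'
    rw [hW]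
    exact Finset.sup'_congr _ rfl fun k _ => hSeq k ω'
  -- measurability
  have hMnmeas : ∀ (n : ℕ) (c : ℕ), Measurable fun ω' => Mn n (fun i => ξ (i + c) ω') :=
    fun n c => (measurable_Mn n).comp (measurable_pi_lambda _ fun i => hξmeas (i + c))
  have hWmeas : Measurable W := by
    have h1 : Measurable fun q : Ω × ℕ => Mn q.2 (fun i => ξ (i + 1) q.1) :=
      measurable_from_prod_countable_left fun n => hMnmeas n 1
    have h2 := h1.comp (measurable_id.prodMk hNmeas)
    have h3 : W = fun ω' => Mn (N ω') (fun i => ξ (i + 1) ω') := funext hWeq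
    rw [h3]
    exact h2
  -- laws of shifted maxima
  set ν : ℕ → Measure ℝ := fun n => Measure.map (fun ω' => Mn n (fun i => ξ (i + 1) ω')) P
    with hνdef
  haveI hνprob : ∀ n, IsProbabilityMeasure (ν n) :=
    fun n => Measure.isProbabilityMeasure_map (hMnmeas n 1).aemeasurable
  have hφm : Measurable fun q : ℝ × ℝ => max 0 (q.1 + q.2) :=
    measurable_const.max (measurable_fst.add measurable_snd)
  -- independence of ξ a from max over later increments
  have hindep_shift : ∀ (n a : ℕ),
      IndepFun (ξ a) (fun ω' => Mn n (fun i => ξ (i + (a + 1)) ω')) P := by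
    intro n a
    set T : Finset ℕ := (Finset.range n).image (fun i => i + (a + 1)) with hT
    have hST : Disjoint ({a} : Finset ℕ) T := by
      simp only [Finset.disjoint_singleton_left, hT, Finset.mem_image, Finset.mem_range]
      rintro ⟨i, -, h⟩
      omega
    have h := hξindep.indepFun_finset {a} T hST hξmeas
    have hgl : Measurable fun v : ({a} : Finset ℕ) → ℝ => v ⟨a, Finset.mem_singleton_self a⟩ :=
      measurable_pi_apply _
    set g : (T → ℝ) → ℝ :=
      fun v => Mn n (fun i => if h : i + (a + 1) ∈ T then v ⟨i + (a + 1), h⟩ else 0) with hg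
    have hgm : Measurable g := by
      refine (measurable_Mn n).comp (measurable_pi_lambda _ fun i => ?_)
      by_cases h : i + (a + 1) ∈ T
      · simpa [h] using measurable_pi_apply (⟨i + (a + 1), h⟩ : T)
      · simpa [h] using (measurable_const : Measurable fun _ : (T → ℝ) => (0:ℝ))
    have h2 := h.comp hgl hgm
    have h3 : (g ∘ fun ω' (i : T) => ξ i ω') = fun ω' => Mn n (fun i => ξ (i + (a + 1)) ω') := by
      funext ω'
      refine Mn_congr fun i hi => ?_
      have hmem : i + (a + 1) ∈ T := Finset.mem_image.2 ⟨i, Finset.mem_range.2 hi, rfl⟩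
      simp [g, hmem]
    rw [h3] at h2
    exact h2
  -- product law for the pair
  have hprod : ∀ (n a : ℕ),
      Measure.map (fun ω' => (ξ a ω', Mn n (fun i => ξ (i + (a + 1)) ω'))) P
        = μ.prod (Measure.map (fun ω' => Mn n (fun i => ξ (i + (a + 1)) ω')) P) := by
    intro n a
    rw [(indepFun_iff_map_prod_eq_prod_map_map (hξmeas a).aemeasurable
      (hMnmeas n (a + 1)).aemeasurable).1 (hindep_shift n a), hξlaw a]
  -- the one-step recursion, at any shift
  have hstep : ∀ (n a : ℕ),
      Measure.map (fun ω' => Mn (n + 1) (fun i => ξ (i + a) ω')) P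
        = Measure.map (fun q : ℝ × ℝ => max 0 (q.1 + q.2))
            (μ.prod (Measure.map (fun ω' => Mn n (fun i => ξ (i + (a + 1)) ω')) P)) := by
    intro n a
    have heq : (fun ω' => Mn (n + 1) (fun i => ξ (i + a) ω'))
        = (fun q : ℝ × ℝ => max 0 (q.1 + q.2))
            ∘ (fun ω' => (ξ a ω', Mn n (fun i => ξ (i + (a + 1)) ω'))) := by
      funext ω'
      show Mn (n + 1) (fun i => ξ (i + a) ω')
        = max 0 (ξ a ω' + Mn n (fun i => ξ (i + (a + 1)) ω'))
      rw [Mn_succ]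
      congr 1
      congr 1
      · show ξ (0 + a) ω' = ξ a ω'
        rw [Nat.zero_add]
      · refine Mn_congr fun i _ => ?_
        show ξ (i + 1 + a) ω' = ξ (i + (a + 1)) ω'
        rw [show i + 1 + a = i + (a + 1) by omega]
    rw [heq, ← Measure.map_map hφm ((hξmeas a).prodMk (hMnmeas n (a + 1))), hprod n a]
  -- law of shifted maximum does not depend on the shift
  have hLshift : ∀ (n a : ℕ),
      Measure.map (fun ω' => Mn n (fun i => ξ (i + a) ω')) P = ν n := by
    intro n
    induction n with
    | zero =>
      intro a
      have h1 : (fun ω' => Mn 0 (fun i => ξ (i + a) ω')) = fun _ => (0:ℝ) :=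
        funext fun ω' => Mn_zero _
      have h2 : (fun ω' => Mn 0 (fun i => ξ (i + 1) ω')) = fun _ => (0:ℝ) :=
        funext fun ω' => Mn_zero _
      show _ = Measure.map (fun ω' => Mn 0 fun i => ξ (i + 1) ω') P
      rw [h1, h2]
    | succ n ih =>
      intro a
      rw [hstep n a, ih (a + 1)]
      have h := hstep n 1
      rw [ih (1 + 1)] at h
      exact h.symm
  have hν_succ : ∀ n, ν (n + 1)
      = Measure.map (fun q : ℝ × ℝ => max 0 (q.1 + q.2)) (μ.prod (ν n)) := by
    intro n
    have h := hstep n 1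
    rw [hLshift n (1 + 1)] at h
    exact h
  -- partition of {W ≤ s} according to the value of N
  have hpart : ∀ s : ℝ, P {ω' | W ω' ≤ s} = ∑' n, P {ω' | N ω' = n} * ν n (Set.Iic s) := by
    intro s
    have hset : {ω' | W ω' ≤ s}
        = ⋃ n, ({ω' | N ω' = n} ∩ {ω' | Mn n (fun i => ξ (i + 1) ω') ≤ s}) := by
      ext ω'
      simp only [Set.mem_setOf_eq, Set.mem_iUnion, Set.mem_inter_iff]
      constructor
      · intro h
        exact ⟨N ω', rfl, by rwa [hWeq] at h⟩
      · rintro ⟨n, hn, h⟩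
        rw [hWeq, hn]
        exact h
    have hdisj : Pairwise (Function.onFun Disjoint fun n =>
        ({ω' | N ω' = n} ∩ {ω' | Mn n (fun i => ξ (i + 1) ω') ≤ s})) := by
      intro m n hmn
      refine Set.disjoint_left.2 ?_
      rintro ω' ⟨h1, -⟩ ⟨h2, -⟩
      exact hmn (h1.symm.trans h2)
    have hmeas : ∀ n : ℕ, MeasurableSet
        ({ω' | N ω' = n} ∩ {ω' | Mn n (fun i => ξ (i + 1) ω') ≤ s}) := by
      intro n
      exact (hNmeas (measurableSet_singleton n)).inter ((hMnmeas n 1) measurableSet_Iic)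
    rw [hset, measure_iUnion hdisj hmeas]
    refine tsum_congr fun n => ?_
    have hind : IndepFun (fun ω' => Mn n (fun i => ξ (i + 1) ω')) N P := by
      have hh : Measurable fun y : ℕ → ℝ => Mn n (fun i => y (i + 1)) :=
        (measurable_Mn n).comp (measurable_pi_lambda _ fun i => measurable_pi_apply _)
      exact hNξ.comp hh measurable_id
    have h := hind.measure_inter_preimage_eq_mul (Set.Iic s) {n}
      measurableSet_Iic (measurableSet_singleton n)
    have hpre1 : (fun ω' => Mn n (fun i => ξ (i + 1) ω')) ⁻¹' (Set.Iic s)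
        = {ω' | Mn n (fun i => ξ (i + 1) ω') ≤ s} := rfl
    have hpre2 : N ⁻¹' ({n} : Set ℕ) = {ω' | N ω' = n} := rfl
    rw [hpre1, hpre2] at h
    rw [Set.inter_comm] at h
    rw [h, hνdef]
    rw [Measure.map_apply (hMnmeas n 1) measurableSet_Iic, hpre1, mul_comm]
  -- the common series
  have hDm : ∀ t : ℝ, MeasurableSet {q : ℝ × ℝ | q.1 + q.2 ≤ t} :=
    fun t => measurableSet_le (measurable_fst.add measurable_snd) measurable_const
  -- LHS formula for t ≥ 0
  have hLHS : ∀ t : ℝ, 0 ≤ t → P {ω' | W ω' ≤ t}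
      = ENNReal.ofReal p + ENNReal.ofReal (1 - p)
          * ∑' n, P {ω' | N ω' = n} * (μ.prod (ν n)) {q : ℝ × ℝ | q.1 + q.2 ≤ t} := by
    intro t ht
    rw [hpart t, tsum_eq_zero_add' ENNReal.summable]
    have hν0 : ν 0 (Set.Iic t) = 1 := by
      show Measure.map (fun ω' => Mn 0 fun i => ξ (i + 1) ω') P (Set.Iic t) = 1
      rw [Measure.map_apply (hMnmeas 0 1) measurableSet_Iic]
      have h : (fun ω' => Mn 0 fun i => ξ (i + 1) ω') ⁻¹' (Set.Iic t) = Set.univ := by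
        ext ω'
        simp [Mn_zero, ht]
      rw [h, measure_univ]
    have hN0 : P {ω' | N ω' = 0} = ENNReal.ofReal p := by
      rw [hNlaw 0]
      norm_num
    have hνs : ∀ n, ν (n + 1) (Set.Iic t)
        = (μ.prod (ν n)) {q : ℝ × ℝ | q.1 + q.2 ≤ t} := by
      intro n
      rw [hν_succ n, Measure.map_apply hφm measurableSet_Iic]
      congr 1
      ext q
      simp only [Set.mem_preimage, Set.mem_Iic, Set.mem_setOf_eq, sup_le_iff]
      exact ⟨fun h => h.2, fun h => ⟨ht, h⟩⟩
    have hNs : ∀ n, P {ω' | N ω' = n + 1}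
        = ENNReal.ofReal (1 - p) * P {ω' | N ω' = n} := by
      intro n
      rw [hNlaw, hNlaw, ← ENNReal.ofReal_mul (by linarith : (0:ℝ) ≤ 1 - p)]
      congr 1
      ring
    have hterms : ∀ n, P {ω' | N ω' = n + 1} * ν (n + 1) (Set.Iic t)
        = ENNReal.ofReal (1 - p)
            * (P {ω' | N ω' = n} * (μ.prod (ν n)) {q : ℝ × ℝ | q.1 + q.2 ≤ t}) := by
      intro n
      rw [hNs n, hνs n, mul_assoc]
    rw [hN0, hν0, mul_one, tsum_congr hterms, ENNReal.tsum_mul_left]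
  -- measurability of the right-hand side function
  have hYmeas : Measurable fun ω' => I ω' * max (W ω' + X ω') 0 :=
    hImeas.mul ((hWmeas.add hXmeas).max measurable_const)
  -- events on which I is 0 or 1
  have hA0m : MeasurableSet {ω' | I ω' = 0} := hImeas (measurableSet_singleton 0)
  have hA1m : MeasurableSet {ω' | I ω' = 1} := hImeas (measurableSet_singleton 1)
  have hdisj01 : Disjoint {ω' | I ω' = 0} {ω' | I ω' = 1} := by
    refine Set.disjoint_left.2 ?_
    intro ω' h0 h1
    simp only [Set.mem_setOf_eq] at h0 h1
    rw [h0] at h1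
    exact zero_ne_one h1
  have hPU : P ({ω' | I ω' = 0} ∪ {ω' | I ω' = 1}) = 1 := by
    rw [measure_union hdisj01 hA1m, hI0, hI1,
      ← ENNReal.ofReal_add hp0.le (by linarith : (0:ℝ) ≤ 1 - p)]
    norm_num
  have hPUc : P ({ω' | I ω' = 0} ∪ {ω' | I ω' = 1})ᶜ = 0 := by
    rw [measure_compl (hA0m.union hA1m) (measure_ne_top P _), hPU, measure_univ, tsub_self]
  have hsplit : ∀ E : Set Ω, MeasurableSet E →
      P E = P (E ∩ {ω' | I ω' = 0}) + P (E ∩ {ω' | I ω' = 1}) := by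
    intro E hEm
    have h1 : P (E ∩ ({ω' | I ω' = 0} ∪ {ω' | I ω' = 1}))
        + P (E \ ({ω' | I ω' = 0} ∪ {ω' | I ω' = 1})) = P E :=
      measure_inter_add_diff E (hA0m.union hA1m)
    have h2 : P (E \ ({ω' | I ω' = 0} ∪ {ω' | I ω' = 1})) = 0 :=
      le_antisymm (le_trans (measure_mono (Set.diff_subset_compl _ _)) hPUc.le) zero_le
    rw [h2, add_zero] at h1
    rw [← h1, Set.inter_union_distrib_left,
      measure_union (hdisj01.mono Set.inter_subset_right Set.inter_subset_right)
        (hEm.inter hA1m)]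
  -- independence derived from hIXW
  have hmeas3 : ∀ i, Measurable (![I, X, W] i) := by
    intro i
    fin_cases i
    · exact hImeas
    · exact hXmeas
    · exact hWmeas
  have hindXW : IndepFun X W P := hIXW.indepFun (show (1 : Fin 3) ≠ 2 by decide)
  have hindI : IndepFun (fun ω' => X ω' + W ω') I P := by
    have h := hIXW.indepFun_prodMk hmeas3 1 2 0 (by decide) (by decide)
    exact h.comp (measurable_fst.add measurable_snd) measurable_id
  -- law of X + W
  have hXW : ∀ t : ℝ, P {ω' | X ω' + W ω' ≤ t}
      = ∑' n, P {ω' | N ω' = n} * (μ.prod (ν n)) {q : ℝ × ℝ | q.1 + q.2 ≤ t} := by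
    intro t
    have hmapXW : Measure.map (fun ω' => (X ω', W ω')) P = μ.prod (Measure.map W P) :=
      (indepFun_iff_map_prod_eq_prod_map_map hXmeas.aemeasurable hWmeas.aemeasurable).1 hindXW
    have hsec : ∀ x : ℝ, Prod.mk x ⁻¹' {q : ℝ × ℝ | q.1 + q.2 ≤ t} = Set.Iic (t - x) := by
      intro x
      ext w
      simp [le_sub_iff_add_le']
    have h1 : P {ω' | X ω' + W ω' ≤ t}
        = (μ.prod (Measure.map W P)) {q : ℝ × ℝ | q.1 + q.2 ≤ t} := by
      rw [← hmapXW, Measure.map_apply (hXmeas.prodMk hWmeas) (hDm t)]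
      rfl
    have hanti : ∀ n : ℕ, Measurable fun x : ℝ => ν n (Set.Iic (t - x)) := by
      intro n
      refine Antitone.measurable fun x y hxy => ?_
      exact measure_mono (Set.Iic_subset_Iic.2 (by linarith))
    rw [h1, Measure.prod_apply (hDm t)]
    have h2 : ∀ x : ℝ, Measure.map W P (Prod.mk x ⁻¹' {q : ℝ × ℝ | q.1 + q.2 ≤ t})
        = ∑' n, P {ω' | N ω' = n} * ν n (Set.Iic (t - x)) := by
      intro x
      rw [hsec x, Measure.map_apply hWmeas measurableSet_Iic]
      exact hpart (t - x)
    rw [lintegral_congr h2, lintegral_tsum fun n =>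
      ((hanti n).const_mul _).aemeasurable]
    refine tsum_congr fun n => ?_
    rw [lintegral_const_mul _ (hanti n)]
    congr 1
    rw [Measure.prod_apply (hDm t)]
    refine lintegral_congr fun x => ?_
    rw [hsec x]
  -- RHS formula for t ≥ 0
  have hRHS : ∀ t : ℝ, 0 ≤ t → P {ω' | I ω' * max (W ω' + X ω') 0 ≤ t}
      = ENNReal.ofReal p + ENNReal.ofReal (1 - p)
          * ∑' n, P {ω' | N ω' = n} * (μ.prod (ν n)) {q : ℝ × ℝ | q.1 + q.2 ≤ t} := by
    intro t ht
    have hEm : MeasurableSet {ω' | I ω' * max (W ω' + X ω') 0 ≤ t} :=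
      measurableSet_le hYmeas measurable_const
    rw [hsplit _ hEm]
    have hEA0 : {ω' | I ω' * max (W ω' + X ω') 0 ≤ t} ∩ {ω' | I ω' = 0} = {ω' | I ω' = 0} := by
      ext ω'
      simp only [Set.mem_inter_iff, Set.mem_setOf_eq]
      refine ⟨fun h => h.2, fun h => ⟨?_, h⟩⟩
      rw [h, zero_mul]
      exact ht
    have hEA1 : {ω' | I ω' * max (W ω' + X ω') 0 ≤ t} ∩ {ω' | I ω' = 1}
        = {ω' | X ω' + W ω' ≤ t} ∩ {ω' | I ω' = 1} := by
      ext ω'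
      simp only [Set.mem_inter_iff, Set.mem_setOf_eq]
      constructor
      · rintro ⟨hE, h1⟩
        rw [h1, one_mul, max_le_iff] at hE
        exact ⟨by linarith [hE.1], h1⟩
      · rintro ⟨hE, h1⟩
        refine ⟨?_, h1⟩
        rw [h1, one_mul]
        exact max_le (by linarith) ht
    have hP1 : P ({ω' | X ω' + W ω' ≤ t} ∩ {ω' | I ω' = 1})
        = P {ω' | X ω' + W ω' ≤ t} * ENNReal.ofReal (1 - p) := by
      have h := hindI.measure_inter_preimage_eq_mul (Set.Iic t) {1}
        measurableSet_Iic (measurableSet_singleton 1)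
      have hpre1 : (fun ω' => X ω' + W ω') ⁻¹' (Set.Iic t) = {ω' | X ω' + W ω' ≤ t} := rfl
      have hpre2 : I ⁻¹' ({1} : Set ℝ) = {ω' | I ω' = 1} := rfl
      rw [hpre1, hpre2] at h
      rw [h, hI1]
    rw [hEA0, hEA1, hI0, hP1, hXW t, mul_comm]
  -- final assembly
  haveI : IsProbabilityMeasure (Measure.map W P) :=
    Measure.isProbabilityMeasure_map hWmeas.aemeasurable
  refine MeasureTheory.Measure.ext_of_Iic _ _ fun t => ?_
  rw [Measure.map_apply hWmeas measurableSet_Iic, Measure.map_apply hYmeas measurableSet_Iic]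
  show P {ω' | W ω' ≤ t} = P {ω' | I ω' * max (W ω' + X ω') 0 ≤ t}
  rcases le_or_gt 0 t with ht | ht
  · rw [hLHS t ht, hRHS t ht]
  · -- t < 0 : both sides are 0
    have hWz : {ω' | W ω' ≤ t} = ∅ := by
      ext ω'
      simp only [Set.mem_setOf_eq, Set.mem_empty_iff_false, iff_false, not_le]
      calc t < 0 := ht
        _ ≤ W ω' := by rw [hWeq]; exact Mn_nonneg _ _
    have hEm : MeasurableSet {ω' | I ω' * max (W ω' + X ω') 0 ≤ t} :=
      measurableSet_le hYmeas measurable_const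
    rw [hWz, measure_empty, hsplit _ hEm]
    have hEA0 : {ω' | I ω' * max (W ω' + X ω') 0 ≤ t} ∩ {ω' | I ω' = 0} = ∅ := by
      ext ω'
      simp only [Set.mem_inter_iff, Set.mem_setOf_eq, Set.mem_empty_iff_false, iff_false]
      rintro ⟨hE, h0⟩
      rw [h0, zero_mul] at hE
      linarith
    have hEA1 : {ω' | I ω' * max (W ω' + X ω') 0 ≤ t} ∩ {ω' | I ω' = 1} = ∅ := by
      ext ω'
      simp only [Set.mem_inter_iff, Set.mem_setOf_eq, Set.mem_empty_iff_false, iff_false]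
      rintro ⟨hE, h1⟩
      rw [h1, one_mul] at hE
      have := le_max_right (W ω' + X ω') (0:ℝ)
      linarith
    rw [hEA0, hEA1, measure_empty, add_zero]
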